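/- Let p, q ∈ ℚ∞ with p > q and let x, y ∈ H. Then ⟨v_p^x, v_q^y⟩ = 0 if and only if the following condition, depending on the types (t(p), t(q)), holds: if t(p) = t(q) (any of the three values), then x = y and d(p,q) = 2; if (t(p),t(q)) = (0,1), then y ∈ H⁺x and d(p,q) = 1; if (t(p),t(q)) = (0,∞), then x ∈ -H⁺y and d(p,q) = 1; if (t(p),t(q)) = (1,0), then x ∈ H⁺y and d(p,q) = 1; if (t(p),t(q)) = (1,∞), then y ∈ H⁺x and d(p,q) = 1; if (t(p),t(q)) = (∞,0), then y ∈ -H⁺x and d(p,q) = 1; if (t(p),t(q)) = (∞,1), then x ∈ H⁺y and d(p,q) = 1. -/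

import Mathlib

open Matrix

abbrev V6 := Fin 6 → ℤ

def C6 : Matrix (Fin 6) (Fin 6) ℤ :=
  !![1,0,-1,-1,1,1;
     0,1,-1,-1,1,1;
     0,0,1,0,-1,-1;
     0,0,0,1,-1,-1;
     0,0,0,0,1,0;
     0,0,0,0,0,1]

/-- The bilinear form `⟨x,y⟩ = xᵀ C y` on `ℤ^6`. -/
def form (x y : V6) : ℤ := x ⬝ᵥ C6.mulVec y

/-- The quaternion `i`. -/
def qI : Quaternion ℤ := ⟨0,1,0,0⟩
/-- The quaternion `j`. -/
def qJ : Quaternion ℤ := ⟨0,0,1,0⟩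
/-- The quaternion `k`. -/
def qK : Quaternion ℤ := ⟨0,0,0,1⟩

instance : DecidableEq (Quaternion ℤ) := fun x y =>
  decidable_of_iff (x.re = y.re ∧ x.imI = y.imI ∧ x.imJ = y.imJ ∧ x.imK = y.imK)
    ⟨fun ⟨h1, h2, h3, h4⟩ => QuaternionAlgebra.ext h1 h2 h3 h4,
     fun h => by subst h; exact ⟨rfl, rfl, rfl, rfl⟩⟩

/-- The quaternion group `H = {±1, ±i, ±j, ±k}`. -/
def Hset : Finset (Quaternion ℤ) := {1, -1, qI, -qI, qJ, -qJ, qK, -qK}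

/-- The subset `H⁺ = {1, i, j, k}`. -/
def Hplus : Finset (Quaternion ℤ) := {1, qI, qJ, qK}

/-- Index type for the three special slopes `0`, `1`, `∞`. -/
inductive Ty | zero | one | inf
deriving DecidableEq

def h0 : V6 := ![0,0,1,1,1,1]
def h1 : V6 := ![1,1,2,2,1,1]
def hinf : V6 := ![1,1,1,1,0,0]

def hTy : Ty → V6
  | .zero => h0
  | .one => h1
  | .inf => hinf

/-- The vectors `v_t^x` for `t ∈ {0,1,∞}` and `x ∈ H⁺`. -/
def vposTy : Ty → Quaternion ℤ → V6
  | .zero, x => if x = 1 then ![0,0,1,0,1,0] else if x = qI then ![-1,0,0,0,0,0]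
      else if x = qJ then ![0,0,1,0,0,1] else ![0,1,1,1,1,1]
  | .one, x => if x = 1 then ![1,0,1,1,1,0] else if x = qI then ![0,1,1,1,1,0]
      else if x = qJ then ![0,0,1,0,0,0] else ![1,1,2,1,1,1]
  | .inf, x => if x = 1 then ![1,0,0,1,0,0] else if x = qI then ![1,1,1,1,1,0]
      else if x = qJ then ![0,0,0,0,0,-1] else ![1,0,1,0,0,0]

/-- The vectors `v_t^x` for `t ∈ {0,1,∞}` and `x ∈ H`, with `v_t^{-x} = h_t - v_t^x`. -/
def vTy (t : Ty) (x : Quaternion ℤ) : V6 :=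
  if x ∈ Hplus then vposTy t x else hTy t - vposTy t (-x)

/-- `a(q)`: numerator, with `a(∞) = 1`. -/
def aQ : WithTop ℚ → ℤ := WithTop.recTopCoe 1 Rat.num

/-- `b(q)`: denominator, with `b(∞) = 0`. -/
def bQ : WithTop ℚ → ℤ := WithTop.recTopCoe 0 (fun x => (x.den : ℤ))

/-- The type `t(q) ∈ {0,1,∞}` of a slope `q`. -/
def tyQ (q : WithTop ℚ) : Ty :=
  if aQ q % 2 = 0 then Ty.zero else if bQ q % 2 = 1 then Ty.one else Ty.inf

/-- `⌊n⌋₂ = n/2` for even `n` and `(n-1)/2` for odd `n`. -/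
def half2 (n : ℤ) : ℤ := if Even n then n / 2 else (n - 1) / 2

/-- `h_q = b(q)·h₀ + a(q)·h_∞`. -/
def hQ (q : WithTop ℚ) : V6 := bQ q • h0 + aQ q • hinf

/-- `v_q^x = v_{t(q)}^x + ⌊b(q)⌋₂·h₀ + ⌊a(q)⌋₂·h_∞`. -/
def vQ (q : WithTop ℚ) (x : Quaternion ℤ) : V6 :=
  vTy (tyQ q) x + half2 (bQ q) • h0 + half2 (aQ q) • hinf

/-- `rk e = ⟨e, h_∞⟩`. -/
def rk (e : V6) : ℤ := form e hinf

/-- `deg e = ⟨h₀, e⟩`. -/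
def degV (e : V6) : ℤ := form h0 e

/-- `e` is positive if `rk e > 0`, or `rk e = 0` and `deg e > 0`. -/
def PosV (e : V6) : Prop := 0 < rk e ∨ (rk e = 0 ∧ 0 < degV e)

/-- `d(p,q) = |a(q)b(p) - a(p)b(q)|`. -/
def dQ (p q : WithTop ℚ) : ℤ := |aQ q * bQ p - aQ p * bQ q|

/-- Complexity `c(p) = |a(p)| + |b(p)| + |a(p)+b(p)|`. -/
def cpx (p : WithTop ℚ) : ℤ := |aQ p| + |bQ p| + |aQ p + bQ p|

lemma form_add_left (u v w : V6) : form (u + v) w = form u w + form v w := by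
  simp [form, add_dotProduct]
lemma form_smul_left (c : ℤ) (u w : V6) : form (c • u) w = c * form u w := by
  simp [form, dotProduct, Pi.smul_apply, smul_eq_mul, Finset.mul_sum, mul_assoc]
lemma form_add_right (u v w : V6) : form u (v + w) = form u v + form u w := by
  simp [form, Matrix.mulVec_add, dotProduct_add]
lemma form_smul_right (c : ℤ) (u w : V6) : form u (c • w) = c * form u w := by
  simp [form, dotProduct, Matrix.mulVec, Pi.smul_apply, smul_eq_mul, Finset.mul_sum]
  congr 1; ext i; congr 1; ext j; ring
lemma fc1 : form h0 h0 = 0 := by decide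
lemma fc2 : form h0 hinf = 2 := by decide
lemma fc3 : form hinf h0 = -2 := by decide
lemma fc4 : form hinf hinf = 0 := by decide

lemma form_vQ (p q : WithTop ℚ) (x y : Quaternion ℤ) :
    form (vQ p x) (vQ q y) =
      form (vTy (tyQ p) x) (vTy (tyQ q) y)
      + half2 (bQ q) * form (vTy (tyQ p) x) h0
      + half2 (aQ q) * form (vTy (tyQ p) x) hinf
      + half2 (bQ p) * form h0 (vTy (tyQ q) y)
      + half2 (aQ p) * form hinf (vTy (tyQ q) y)
      + (half2 (bQ p) * half2 (aQ q) - half2 (aQ p) * half2 (bQ q)) * 2 := by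
  simp only [vQ, form_add_left, form_add_right, form_smul_left, form_smul_right,
    fc1, fc2, fc3, fc4]
  ring
lemma half2_spec (n : ℤ) : n = 2 * half2 n + n % 2 := by
  unfold half2; split <;> rename_i h
  · rw [Int.even_iff] at h; omega
  · rw [Int.not_even_iff] at h; omega

lemma gcd_aQ_bQ (q : WithTop ℚ) : Int.gcd (aQ q) (bQ q) = 1 := by
  cases q with
  | top => decide
  | coe r =>
    show Int.gcd r.num (r.den : ℤ) = 1
    simpa [Int.gcd] using r.reduced

lemma tyQ_parity (q : WithTop ℚ) :
    (tyQ q = .zero ∧ aQ q % 2 = 0 ∧ bQ q % 2 = 1) ∨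
    (tyQ q = .one ∧ aQ q % 2 = 1 ∧ bQ q % 2 = 1) ∨
    (tyQ q = .inf ∧ aQ q % 2 = 1 ∧ bQ q % 2 = 0) := by
  have hg := gcd_aQ_bQ q
  have hne : ¬ (aQ q % 2 = 0 ∧ bQ q % 2 = 0) := by
    rintro ⟨h1, h2⟩
    have d1 : (2:ℤ) ∣ aQ q := by omega
    have d2 : (2:ℤ) ∣ bQ q := by omega
    have := Int.dvd_gcd d1 d2
    rw [hg] at this
    norm_num at this
  unfold tyQ
  rcases Int.emod_two_eq (aQ q) with h1 | h1 <;> rcases Int.emod_two_eq (bQ q) with h2 | h2 <;>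
    simp [h1, h2] at *

lemma hpos_lem (p q : WithTop ℚ) (h : q < p) : 1 ≤ aQ p * bQ q - aQ q * bQ p := by
  cases p with
  | top =>
    cases q with
    | top => exact absurd h (lt_irrefl _)
    | coe s =>
      show 1 ≤ 1 * (s.den : ℤ) - s.num * 0
      have := s.den_pos; omega
  | coe r =>
    cases q with
    | top => exact absurd h (by simp)
    | coe s =>
      have hs : s < r := WithTop.coe_lt_coe.mp h
      show 1 ≤ r.num * (s.den : ℤ) - s.num * (r.den : ℤ)
      have := (Rat.lt_iff _ _).mp hs
      omega

lemma dQ_eq (p q : WithTop ℚ) (h : q < p) : dQ p q = aQ p * bQ q - aQ q * bQ p := by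
  have := hpos_lem p q h
  unfold dQ
  rw [abs_sub_comm, abs_of_pos (by omega)]

lemma dexp (A B a b m n m' n' al be al' be' : ℤ)
    (hA : A = 2*m + al) (hB : B = 2*n + be) (ha : a = 2*m' + al') (hb : b = 2*n' + be') :
    A*b - a*B = 4*(m*n') - 4*(n*m') + 2*m*be' + 2*n'*al - 2*m'*be - 2*n*al' + al*be' - al'*be := by
  subst hA hB ha hb; ring
lemma const_zero : ∀ x ∈ Hset, form (vTy .zero x) h0 = 0 ∧ form (vTy .zero x) hinf = 1 ∧
    form h0 (vTy .zero x) = 0 ∧ form hinf (vTy .zero x) = -1 := by decide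
lemma const_one : ∀ x ∈ Hset, form (vTy .one x) h0 = -1 ∧ form (vTy .one x) hinf = 1 ∧
    form h0 (vTy .one x) = 1 ∧ form hinf (vTy .one x) = -1 := by decide
lemma const_inf : ∀ x ∈ Hset, form (vTy .inf x) h0 = -1 ∧ form (vTy .inf x) hinf = 0 ∧
    form h0 (vTy .inf x) = 1 ∧ form hinf (vTy .inf x) = 0 := by decide
lemma pair_zero_zero : ∀ x ∈ Hset, ∀ y ∈ Hset,
    ((x = y) ↔ form (vTy .zero x) (vTy .zero y) = 1) ∧
    (form (vTy .zero x) (vTy .zero y) = -1 ∨ form (vTy .zero x) (vTy .zero y) = 0 ∨ form (vTy .zero x) (vTy .zero y) = 1) := by decide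

lemma pair_zero_one : ∀ x ∈ Hset, ∀ y ∈ Hset,
    ((∃ h ∈ Hplus, y = h * x) ↔ form (vTy .zero x) (vTy .one y) = 1) ∧
    (form (vTy .zero x) (vTy .one y) = 0 ∨ form (vTy .zero x) (vTy .one y) = 1) := by decide

lemma pair_zero_inf : ∀ x ∈ Hset, ∀ y ∈ Hset,
    ((∃ h ∈ Hplus, x = -(h * y)) ↔ form (vTy .zero x) (vTy .inf y) = 1) ∧
    (form (vTy .zero x) (vTy .inf y) = 0 ∨ form (vTy .zero x) (vTy .inf y) = 1) := by decide

lemma pair_one_zero : ∀ x ∈ Hset, ∀ y ∈ Hset,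
    ((∃ h ∈ Hplus, x = h * y) ↔ form (vTy .one x) (vTy .zero y) = 0) ∧
    (form (vTy .one x) (vTy .zero y) = -1 ∨ form (vTy .one x) (vTy .zero y) = 0) := by decide

lemma pair_one_one : ∀ x ∈ Hset, ∀ y ∈ Hset,
    ((x = y) ↔ form (vTy .one x) (vTy .one y) = 1) ∧
    (form (vTy .one x) (vTy .one y) = -1 ∨ form (vTy .one x) (vTy .one y) = 0 ∨ form (vTy .one x) (vTy .one y) = 1) := by decide

lemma pair_one_inf : ∀ x ∈ Hset, ∀ y ∈ Hset,
    ((∃ h ∈ Hplus, y = h * x) ↔ form (vTy .one x) (vTy .inf y) = 1) ∧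
    (form (vTy .one x) (vTy .inf y) = 0 ∨ form (vTy .one x) (vTy .inf y) = 1) := by decide

lemma pair_inf_zero : ∀ x ∈ Hset, ∀ y ∈ Hset,
    ((∃ h ∈ Hplus, y = -(h * x)) ↔ form (vTy .inf x) (vTy .zero y) = 0) ∧
    (form (vTy .inf x) (vTy .zero y) = -1 ∨ form (vTy .inf x) (vTy .zero y) = 0) := by decide

lemma pair_inf_one : ∀ x ∈ Hset, ∀ y ∈ Hset,
    ((∃ h ∈ Hplus, x = h * y) ↔ form (vTy .inf x) (vTy .one y) = 0) ∧
    (form (vTy .inf x) (vTy .one y) = -1 ∨ form (vTy .inf x) (vTy .one y) = 0) := by decide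

lemma pair_inf_inf : ∀ x ∈ Hset, ∀ y ∈ Hset,
    ((x = y) ↔ form (vTy .inf x) (vTy .inf y) = 1) ∧
    (form (vTy .inf x) (vTy .inf y) = -1 ∨ form (vTy .inf x) (vTy .inf y) = 0 ∨ form (vTy .inf x) (vTy .inf y) = 1) := by decide



theorem stmt8 (p q : WithTop ℚ) (hpq : q < p) (x y : Quaternion ℤ)
    (hx : x ∈ Hset) (hy : y ∈ Hset) :
    form (vQ p x) (vQ q y) = 0 ↔
      (match tyQ p, tyQ q with
      | .zero, .zero => x = y ∧ dQ p q = 2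
      | .one, .one => x = y ∧ dQ p q = 2
      | .inf, .inf => x = y ∧ dQ p q = 2
      | .zero, .one => (∃ h ∈ Hplus, y = h * x) ∧ dQ p q = 1
      | .zero, .inf => (∃ h ∈ Hplus, x = -(h * y)) ∧ dQ p q = 1
      | .one, .zero => (∃ h ∈ Hplus, x = h * y) ∧ dQ p q = 1
      | .one, .inf => (∃ h ∈ Hplus, y = h * x) ∧ dQ p q = 1
      | .inf, .zero => (∃ h ∈ Hplus, y = -(h * x)) ∧ dQ p q = 1
      | .inf, .one => (∃ h ∈ Hplus, x = h * y) ∧ dQ p q = 1) := by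

  have hpos := hpos_lem p q hpq
  have hdq := dQ_eq p q hpq
  have hA := half2_spec (aQ p)
  have hB := half2_spec (bQ p)
  have ha := half2_spec (aQ q)
  have hb := half2_spec (bQ q)
  rw [form_vQ, hdq]
  rcases tyQ_parity p with ⟨htp, hA2, hB2⟩ | ⟨htp, hA2, hB2⟩ | ⟨htp, hA2, hB2⟩ <;>
    rcases tyQ_parity q with ⟨htq, ha2, hb2⟩ | ⟨htq, ha2, hb2⟩ | ⟨htq, ha2, hb2⟩
  · obtain ⟨e1, e2, -, -⟩ := const_zero x hx
    obtain ⟨-, -, e3, e4⟩ := const_zero y hy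
    obtain ⟨hPf, hfr⟩ := pair_zero_zero x hx y hy
    have hd := dexp (aQ p) (bQ p) (aQ q) (bQ q) (half2 (aQ p)) (half2 (bQ p))
        (half2 (aQ q)) (half2 (bQ q)) 0 1 0 1 (by omega) (by omega) (by omega) (by omega)
    rw [hd] at hpos
    simp only [htp, htq, e1, e2, e3, e4, hPf, hd]
    generalize form (vTy Ty.zero x) (vTy Ty.zero y) = f at hfr ⊢
    generalize hS : half2 (aQ p) * half2 (bQ q) = S at hpos ⊢
    generalize hR : half2 (bQ p) * half2 (aQ q) = R at hpos ⊢
    omega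
  · obtain ⟨e1, e2, -, -⟩ := const_zero x hx
    obtain ⟨-, -, e3, e4⟩ := const_one y hy
    obtain ⟨hPf, hfr⟩ := pair_zero_one x hx y hy
    have hd := dexp (aQ p) (bQ p) (aQ q) (bQ q) (half2 (aQ p)) (half2 (bQ p))
        (half2 (aQ q)) (half2 (bQ q)) 0 1 1 1 (by omega) (by omega) (by omega) (by omega)
    rw [hd] at hpos
    simp only [htp, htq, e1, e2, e3, e4, hPf, hd]
    generalize form (vTy Ty.zero x) (vTy Ty.one y) = f at hfr ⊢
    generalize hS : half2 (aQ p) * half2 (bQ q) = S at hpos ⊢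
    generalize hR : half2 (bQ p) * half2 (aQ q) = R at hpos ⊢
    omega
  · obtain ⟨e1, e2, -, -⟩ := const_zero x hx
    obtain ⟨-, -, e3, e4⟩ := const_inf y hy
    obtain ⟨hPf, hfr⟩ := pair_zero_inf x hx y hy
    have hd := dexp (aQ p) (bQ p) (aQ q) (bQ q) (half2 (aQ p)) (half2 (bQ p))
        (half2 (aQ q)) (half2 (bQ q)) 0 1 1 0 (by omega) (by omega) (by omega) (by omega)
    rw [hd] at hpos
    simp only [htp, htq, e1, e2, e3, e4, hPf, hd]
    generalize form (vTy Ty.zero x) (vTy Ty.inf y) = f at hfr ⊢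
    generalize hS : half2 (aQ p) * half2 (bQ q) = S at hpos ⊢
    generalize hR : half2 (bQ p) * half2 (aQ q) = R at hpos ⊢
    omega
  · obtain ⟨e1, e2, -, -⟩ := const_one x hx
    obtain ⟨-, -, e3, e4⟩ := const_zero y hy
    obtain ⟨hPf, hfr⟩ := pair_one_zero x hx y hy
    have hd := dexp (aQ p) (bQ p) (aQ q) (bQ q) (half2 (aQ p)) (half2 (bQ p))
        (half2 (aQ q)) (half2 (bQ q)) 1 1 0 1 (by omega) (by omega) (by omega) (by omega)
    rw [hd] at hpos
    simp only [htp, htq, e1, e2, e3, e4, hPf, hd]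
    generalize form (vTy Ty.one x) (vTy Ty.zero y) = f at hfr ⊢
    generalize hS : half2 (aQ p) * half2 (bQ q) = S at hpos ⊢
    generalize hR : half2 (bQ p) * half2 (aQ q) = R at hpos ⊢
    omega
  · obtain ⟨e1, e2, -, -⟩ := const_one x hx
    obtain ⟨-, -, e3, e4⟩ := const_one y hy
    obtain ⟨hPf, hfr⟩ := pair_one_one x hx y hy
    have hd := dexp (aQ p) (bQ p) (aQ q) (bQ q) (half2 (aQ p)) (half2 (bQ p))
        (half2 (aQ q)) (half2 (bQ q)) 1 1 1 1 (by omega) (by omega) (by omega) (by omega)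
    rw [hd] at hpos
    simp only [htp, htq, e1, e2, e3, e4, hPf, hd]
    generalize form (vTy Ty.one x) (vTy Ty.one y) = f at hfr ⊢
    generalize hS : half2 (aQ p) * half2 (bQ q) = S at hpos ⊢
    generalize hR : half2 (bQ p) * half2 (aQ q) = R at hpos ⊢
    omega
  · obtain ⟨e1, e2, -, -⟩ := const_one x hx
    obtain ⟨-, -, e3, e4⟩ := const_inf y hy
    obtain ⟨hPf, hfr⟩ := pair_one_inf x hx y hy
    have hd := dexp (aQ p) (bQ p) (aQ q) (bQ q) (half2 (aQ p)) (half2 (bQ p))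
        (half2 (aQ q)) (half2 (bQ q)) 1 1 1 0 (by omega) (by omega) (by omega) (by omega)
    rw [hd] at hpos
    simp only [htp, htq, e1, e2, e3, e4, hPf, hd]
    generalize form (vTy Ty.one x) (vTy Ty.inf y) = f at hfr ⊢
    generalize hS : half2 (aQ p) * half2 (bQ q) = S at hpos ⊢
    generalize hR : half2 (bQ p) * half2 (aQ q) = R at hpos ⊢
    omega
  · obtain ⟨e1, e2, -, -⟩ := const_inf x hx
    obtain ⟨-, -, e3, e4⟩ := const_zero y hy
    obtain ⟨hPf, hfr⟩ := pair_inf_zero x hx y hy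
    have hd := dexp (aQ p) (bQ p) (aQ q) (bQ q) (half2 (aQ p)) (half2 (bQ p))
        (half2 (aQ q)) (half2 (bQ q)) 1 0 0 1 (by omega) (by omega) (by omega) (by omega)
    rw [hd] at hpos
    simp only [htp, htq, e1, e2, e3, e4, hPf, hd]
    generalize form (vTy Ty.inf x) (vTy Ty.zero y) = f at hfr ⊢
    generalize hS : half2 (aQ p) * half2 (bQ q) = S at hpos ⊢
    generalize hR : half2 (bQ p) * half2 (aQ q) = R at hpos ⊢
    omega
  · obtain ⟨e1, e2, -, -⟩ := const_inf x hx
    obtain ⟨-, -, e3, e4⟩ := const_one y hy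
    obtain ⟨hPf, hfr⟩ := pair_inf_one x hx y hy
    have hd := dexp (aQ p) (bQ p) (aQ q) (bQ q) (half2 (aQ p)) (half2 (bQ p))
        (half2 (aQ q)) (half2 (bQ q)) 1 0 1 1 (by omega) (by omega) (by omega) (by omega)
    rw [hd] at hpos
    simp only [htp, htq, e1, e2, e3, e4, hPf, hd]
    generalize form (vTy Ty.inf x) (vTy Ty.one y) = f at hfr ⊢
    generalize hS : half2 (aQ p) * half2 (bQ q) = S at hpos ⊢
    generalize hR : half2 (bQ p) * half2 (aQ q) = R at hpos ⊢
    omega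
  · obtain ⟨e1, e2, -, -⟩ := const_inf x hx
    obtain ⟨-, -, e3, e4⟩ := const_inf y hy
    obtain ⟨hPf, hfr⟩ := pair_inf_inf x hx y hy
    have hd := dexp (aQ p) (bQ p) (aQ q) (bQ q) (half2 (aQ p)) (half2 (bQ p))
        (half2 (aQ q)) (half2 (bQ q)) 1 0 1 0 (by omega) (by omega) (by omega) (by omega)
    rw [hd] at hpos
    simp only [htp, htq, e1, e2, e3, e4, hPf, hd]
    generalize form (vTy Ty.inf x) (vTy Ty.inf y) = f at hfr ⊢
    generalize hS : half2 (aQ p) * half2 (bQ q) = S at hpos ⊢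
    generalize hR : half2 (bQ p) * half2 (aQ q) = R at hpos ⊢
    omega
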